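/- arXiv:0710.4223 — 2 statements merged into one kernel-verified Lean document; each statement's English description precedes it below -/
import Mathlib

section
/- Let Λ₀, Λ₁ > 0 with 2·(1/Λ₀ + 1/Λ₁)⁻¹ = 1, and let c > 0, T > 0. For h > 0 dividing the interval, let T(h) be the traversal time of [0, cT] when the speed alternates between c·Λ₀ and c·Λ₁ on consecutive slabs of width h (the last, possibly partial, slab traversed at the appropriate speed). Then |T(h) − T| ≤ (h/c)·|1/Λ₀ − 1/Λ₁|, and in particular T(h) → T as h → 0⁺. -/
/-- Traversal time of `[0, c*T]` when the speed alternates between `c*Λ₀` and `c*Λ₁`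
on consecutive slabs of width `h`, the last (possibly partial) slab being traversed
at the appropriate speed. -/
noncomputable def travTime (c Λ₀ Λ₁ T h : ℝ) : ℝ :=
  ∑ k ∈ Finset.range ⌊c * T / h⌋₊, h / (c * (if Even k then Λ₀ else Λ₁)) +
    (c * T - ⌊c * T / h⌋₊ * h) / (c * (if Even ⌊c * T / h⌋₊ then Λ₀ else Λ₁))

lemma sum_alt (a b : ℝ) (hab : a + b = 2) (N : ℕ) :
    ∑ k ∈ Finset.range N, (if Even k then a else b)
      = if Even N then (N : ℝ) else (N : ℝ) - 1 + a := by
  induction N with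
  | zero => simp
  | succ n ih =>
    rw [Finset.sum_range_succ, ih]
    rcases Nat.even_or_odd n with he | ho
    · have h1 : ¬ Even (n + 1) := by simp [Nat.even_add_one, he]
      simp only [he, if_true, h1, if_false]
      push_cast
      ring
    · have h1 : Even (n + 1) := by simp [Nat.even_add_one, Nat.not_even_iff_odd.mpr ho]
      have h2 : ¬ Even n := Nat.not_even_iff_odd.mpr ho
      simp only [h2, if_false, h1, if_true]
      push_cast
      linarith

theorem stmt_6 (c Λ₀ Λ₁ T : ℝ) (hc : 0 < c) (h0 : 0 < Λ₀) (h1 : 0 < Λ₁) (hT : 0 < T)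
    (hhm : 2 * (1 / Λ₀ + 1 / Λ₁)⁻¹ = 1) :
    (∀ h : ℝ, 0 < h → |travTime c Λ₀ Λ₁ T h - T| ≤ (h / c) * |1 / Λ₀ - 1 / Λ₁|) ∧
    Filter.Tendsto (fun h => travTime c Λ₀ Λ₁ T h) (nhdsWithin 0 (Set.Ioi 0)) (nhds T) := by
  have hab : 1 / Λ₀ + 1 / Λ₁ = 2 := by
    have hne : 1 / Λ₀ + 1 / Λ₁ ≠ 0 := by positivity
    field_simp at hhm ⊢
    nlinarith [mul_pos h0 h1]
  have hbound : ∀ h : ℝ, 0 < h →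
      |travTime c Λ₀ Λ₁ T h - T| ≤ (h / c) * |1 / Λ₀ - 1 / Λ₁| := by
    intro h hh
    set N : ℕ := ⌊c * T / h⌋₊ with hN
    have hct : 0 < c * T := mul_pos hc hT
    have hNle : (N : ℝ) * h ≤ c * T := by
      have := Nat.floor_le (le_of_lt (div_pos hct hh))
      calc (N : ℝ) * h ≤ (c * T / h) * h := by
            apply mul_le_mul_of_nonneg_right this hh.le
        _ = c * T := by field_simp
    have hlt : c * T < ((N : ℝ) + 1) * h := by
      have := Nat.lt_floor_add_one (c * T / h)
      calc c * T = (c * T / h) * h := by field_simp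
        _ < ((N : ℝ) + 1) * h := by
            apply mul_lt_mul_of_pos_right this hh
    set r : ℝ := c * T - (N : ℝ) * h with hr
    have hr0 : 0 ≤ r := by simp [hr]; linarith
    have hrh : r < h := by simp [hr]; nlinarith
    have hTe : T = ((N : ℝ) * h + r) / c := by
      rw [hr]; field_simp; ring
    have key : travTime c Λ₀ Λ₁ T h - T
        = (1 / Λ₀ - 1 / Λ₁) / (2 * c) * (if Even N then r else h - r) := by
      unfold travTime
      rw [← hN]
      have hterm : ∀ k : ℕ, h / (c * (if Even k then Λ₀ else Λ₁))
          = (h / c) * (if Even k then 1 / Λ₀ else 1 / Λ₁) := by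
        intro k
        split_ifs <;> field_simp
      have hlast : (c * T - (N : ℝ) * h) / (c * (if Even N then Λ₀ else Λ₁))
          = (r / c) * (if Even N then 1 / Λ₀ else 1 / Λ₁) := by
        rw [hr]
        split_ifs <;> field_simp
      simp_rw [hterm, ← Finset.mul_sum, sum_alt _ _ hab N, hlast]
      have hB : 1 / Λ₁ = 2 - 1 / Λ₀ := by linarith
      rw [hTe, hB]
      rcases Nat.even_or_odd N with he | ho
      · simp only [he, if_true]
        field_simp
        ring
      · have h2 : ¬ Even N := Nat.not_even_iff_odd.mpr ho
        simp only [h2, if_false]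
        field_simp
        ring
    rw [key, abs_mul, abs_div]
    have h2c : |2 * c| = 2 * c := abs_of_pos (by linarith)
    rw [h2c]
    have hs : |if Even N then r else h - r| ≤ h := by
      split_ifs
      · rw [abs_of_nonneg hr0]; linarith
      · rw [abs_of_nonneg (by linarith)]; linarith
    have hnn : 0 ≤ |1 / Λ₀ - 1 / Λ₁| := abs_nonneg _
    calc |1 / Λ₀ - 1 / Λ₁| / (2 * c) * |if Even N then r else h - r|
        ≤ |1 / Λ₀ - 1 / Λ₁| / (2 * c) * h := by
          apply mul_le_mul_of_nonneg_left hs (by positivity)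
      _ ≤ |1 / Λ₀ - 1 / Λ₁| / c * h := by
          gcongr
          · linarith
      _ = (h / c) * |1 / Λ₀ - 1 / Λ₁| := by ring
  refine ⟨hbound, ?_⟩
  have h0' : Filter.Tendsto (fun h : ℝ => travTime c Λ₀ Λ₁ T h - T)
      (nhdsWithin 0 (Set.Ioi 0)) (nhds 0) := by
    apply squeeze_zero_norm' (a := fun h : ℝ => (h / c) * |1 / Λ₀ - 1 / Λ₁|)
    · filter_upwards [self_mem_nhdsWithin] with h hh
      simpa [Real.norm_eq_abs] using hbound h hh
    · have : Filter.Tendsto (fun h : ℝ => (h / c) * |1 / Λ₀ - 1 / Λ₁|)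
          (nhds 0) (nhds 0) := by
        have := (((continuous_id.div_const c).mul continuous_const).tendsto 0 : Filter.Tendsto (fun h : ℝ => (h / c) * |1 / Λ₀ - 1 / Λ₁|) (nhds 0) _)
        convert this using 2 <;> simp
      exact this.mono_left nhdsWithin_le_nhds
  have := h0'.add_const T
  simpa using this
end

section
/- Let x : ℝ → ℝⁿ solve x' = f(x) and be periodic with minimal period T > 0. Let λ : ℝⁿ → ℝ be continuous with 0 < l ≤ λ on the image of x, and let τ solve τ' = λ(x(τ)), τ(0) = 0. Then z = x ∘ τ is periodic, with period T' equal to the unique time satisfying τ(T') = T, and T' = ∫₀ᵀ 1/λ(x(s)) ds. -/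
theorem stmt_8 (n : ℕ) (f : (Fin n → ℝ) → (Fin n → ℝ)) (x : ℝ → (Fin n → ℝ))
    (hx : ∀ t, HasDerivAt x (f (x t)) t)
    (T : ℝ) (hT : 0 < T) (hper : Function.Periodic x T)
    (hmin : ∀ T' : ℝ, 0 < T' → T' < T → ¬ Function.Periodic x T')
    (lam : (Fin n → ℝ) → ℝ) (hlamc : Continuous lam)
    (l : ℝ) (hl : 0 < l) (hlb : ∀ p ∈ Set.range x, l ≤ lam p)
    (τ : ℝ → ℝ) (hτ : ∀ t, HasDerivAt τ (lam (x (τ t))) t) (hτ0 : τ 0 = 0) :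
    τ (∫ s in (0:ℝ)..T, 1 / lam (x s)) = T ∧
    (∀ t, τ t = T → t = ∫ s in (0:ℝ)..T, 1 / lam (x s)) ∧
    Function.Periodic (fun t => x (τ t)) (∫ s in (0:ℝ)..T, 1 / lam (x s)) := by
  have hcx : Continuous x := by
    refine continuous_iff_continuousAt.2 fun t => (hx t).continuousAt
  have hpos : ∀ s, 0 < lam (x s) := fun s => lt_of_lt_of_le hl (hlb _ ⟨s, rfl⟩)
  have hcont : Continuous fun s => 1 / lam (x s) :=
    continuous_const.div (hlamc.comp hcx) fun s => (hpos s).ne'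
  set F : ℝ → ℝ := fun u => ∫ s in (0:ℝ)..u, 1 / lam (x s) with hF
  have hFd : ∀ u, HasDerivAt F (1 / lam (x u)) u := fun u => (hcont.integral_hasStrictDerivAt 0 u).hasDerivAt
  have hFmono : StrictMono F := by
    apply strictMono_of_deriv_pos
    intro u
    rw [(hFd u).deriv]
    exact div_pos one_pos (hpos u)
  -- any solution of the ODE with value 0 at 0 is inverted by F
  have key : ∀ ρ : ℝ → ℝ, ρ 0 = 0 → (∀ t, HasDerivAt ρ (lam (x (ρ t))) t) →
      ∀ t, F (ρ t) = t := by
    intro ρ hρ0 hρ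
    have hG : ∀ t, HasDerivAt (fun t => F (ρ t) - t) 0 t := by
      intro t
      have h1 : HasDerivAt (fun t => F (ρ t)) (1 / lam (x (ρ t)) * lam (x (ρ t))) t :=
        (hFd (ρ t)).comp t (hρ t)
      rw [one_div_mul_cancel (hpos (ρ t)).ne'] at h1
      have h4 := h1.sub (hasDerivAt_id' t)
      rw [sub_self] at h4
      exact h4
    have hconst : ∀ t, F (ρ t) - t = F (ρ 0) - 0 := by
      intro t
      exact is_const_of_deriv_eq_zero (fun u => (hG u).differentiableAt)
        (fun u => (hG u).deriv) t 0
    intro t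
    have := hconst t
    rw [hρ0] at this
    simp only [hF] at this ⊢
    rw [intervalIntegral.integral_same] at this
    linarith
  have hFτ : ∀ t, F (τ t) = t := key τ hτ0 hτ
  have hFT : F T = ∫ s in (0:ℝ)..T, 1 / lam (x s) := rfl
  set T' : ℝ := ∫ s in (0:ℝ)..T, 1 / lam (x s) with hT'
  have h1 : τ T' = T := by
    have : F (τ T') = F T := by rw [hFτ T', hFT]
    exact hFmono.injective this
  refine ⟨h1, ?_, ?_⟩
  · intro t ht
    have := hFτ t
    rw [ht] at this
    rw [← this, hFT]
  · intro t
    set σ : ℝ → ℝ := fun t => τ (t + T') - T with hσ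
    have hσ0 : σ 0 = 0 := by simp [hσ, h1]
    have hσd : ∀ t, HasDerivAt σ (lam (x (σ t))) t := by
      intro t
      have h2 : HasDerivAt (fun t => τ (t + T')) (lam (x (τ (t + T'))) * 1) t :=
        (hτ (t + T')).comp t ((hasDerivAt_id t).add_const T')
      have h3 : x (τ (t + T')) = x (σ t) := by
        have : τ (t + T') = σ t + T := by simp [hσ]
        rw [this, hper (σ t)]
      rw [mul_one, h3] at h2
      simpa [hσ] using h2.sub_const T
    have hστ : ∀ t, σ t = τ t := by
      intro t
      exact hFmono.injective (by rw [key σ hσ0 hσd t, hFτ t])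
    have : τ (t + T') = τ t + T := by
      have := hστ t
      simp only [hσ] at this
      linarith
    simp only [this]
    exact hper (τ t)
end
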